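/- Let F_q be a finite field, 1 ≤ k < n, and let V = F_q^n with standard basis u_1, …, u_n, and let W be the k-dimensional subspace spanned by u_1, …, u_k. Let A ∈ M_k(F_q), C ∈ M_{n−k,k}(F_q), and let T : W → V be the linear map whose matrix with respect to the bases (u_1,…,u_k) of W and (u_1,…,u_n) of V is the n × k block matrix [A; C]. Then T is simple if and only if (C, A) is a zero kernel pair, i.e. ⋂_{i=0}^{k−1} ker(C A^i) = {0}. -/

import Mathlib

/-- A linear map `T : W → V` defined on a subspace `W` of `V` is *simple* if the only
`T`-invariant subspace properly contained in `V` is the zero subspace. A subspace `U` of `V`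
is `T`-invariant if `U ⊆ W` and `T(U) ⊆ U`. -/
def IsSimple {F V : Type*} [Field F] [AddCommGroup V] [Module F V]
    (W : Submodule F V) (T : W →ₗ[F] V) : Prop :=
  ∀ U : Submodule F V, U ≤ W → (∀ x : W, (x : V) ∈ U → T x ∈ U) → U ≠ ⊤ → U = ⊥

section Aux

variable {F : Type*} [Field F] {n k : ℕ}

/-- embedding of `F^k` into first `k` coordinates of `F^n`. -/
def embL (F : Type*) [Field F] (n k : ℕ) : (Fin k → F) →ₗ[F] (Fin n → F) where
  toFun x := fun i => if h : (i : ℕ) < k then x ⟨i, h⟩ else 0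
  map_add' x y := by funext i; by_cases h : (i : ℕ) < k <;> simp [h]
  map_smul' c x := by funext i; by_cases h : (i : ℕ) < k <;> simp [h]

lemma embL_apply (x : Fin k → F) (i : Fin n) :
    embL F n k x i = if h : (i : ℕ) < k then x ⟨i, h⟩ else 0 := rfl

lemma embL_castLE (hkn : k ≤ n) (x : Fin k → F) (j : Fin k) :
    embL F n k x (Fin.castLE hkn j) = x j := by
  rw [embL_apply, dif_pos (by simp)]
  congr 1

lemma embL_single (hkn : k ≤ n) (j : Fin k) :
    embL F n k (Pi.single j (1 : F)) = Pi.single (Fin.castLE hkn j) 1 := by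
  funext i
  rw [embL_apply]
  by_cases h : (i : ℕ) < k
  · rw [dif_pos h, Pi.single_apply, Pi.single_apply]
    have : ((⟨i, h⟩ : Fin k) = j) ↔ (i = Fin.castLE hkn j) := by
      simp [Fin.ext_iff]
    simp [this]
  · rw [dif_neg h, Pi.single_apply, if_neg]
    intro he
    apply h
    rw [he]
    simpa using j.isLt

lemma embL_injective (hkn : k ≤ n) : Function.Injective (embL F n k) := by
  intro x y hxy
  funext j
  have := congrFun hxy (Fin.castLE hkn j)
  rwa [embL_castLE, embL_castLE] at this

end Aux

section Aux2

variable {F : Type*} [Field F] {n k : ℕ}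

/-- the block map `x ↦ (A x, C x)` as a map `F^k → F^n`, assuming `k < n` implicitly. -/
def blockL (hkn : k < n) (A : Matrix (Fin k) (Fin k) F) (C : Matrix (Fin (n - k)) (Fin k) F) :
    (Fin k → F) →ₗ[F] (Fin n → F) where
  toFun x := fun i => if h : (i : ℕ) < k then A.mulVec x ⟨i, h⟩
    else C.mulVec x ⟨(i : ℕ) - k, Nat.sub_lt_sub_right (Nat.le_of_not_lt h) i.isLt⟩
  map_add' x y := by
    funext i; by_cases h : (i : ℕ) < k <;> simp [h, Matrix.mulVec_add]
  map_smul' c x := by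
    funext i; by_cases h : (i : ℕ) < k <;> simp [h, Matrix.mulVec_smul]

lemma blockL_apply (hkn : k < n) (A : Matrix (Fin k) (Fin k) F)
    (C : Matrix (Fin (n - k)) (Fin k) F) (x : Fin k → F) (i : Fin n) :
    blockL hkn A C x i = if h : (i : ℕ) < k then A.mulVec x ⟨i, h⟩
      else C.mulVec x ⟨(i : ℕ) - k, Nat.sub_lt_sub_right (Nat.le_of_not_lt h) i.isLt⟩ := rfl

lemma blockL_eq_embL (hkn : k < n) (A : Matrix (Fin k) (Fin k) F)
    (C : Matrix (Fin (n - k)) (Fin k) F) (x : Fin k → F) (hC : C.mulVec x = 0) :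
    blockL hkn A C x = embL F n k (A.mulVec x) := by
  funext i
  rw [blockL_apply, embL_apply]
  by_cases h : (i : ℕ) < k
  · simp [h]
  · simp [h, hC]

/-- Cayley–Hamilton: `A ^ k` as a combination of lower powers. -/
lemma pow_card_eq (hk : 1 ≤ k) (A : Matrix (Fin k) (Fin k) F) :
    A ^ k = -∑ j ∈ Finset.range k, A.charpoly.coeff j • A ^ j := by
  have h0 := Matrix.aeval_self_charpoly A
  rw [Polynomial.aeval_eq_sum_range] at h0
  have hd : A.charpoly.natDegree = k := by
    rw [Matrix.charpoly_natDegree_eq_dim, Fintype.card_fin]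
  have hm : A.charpoly.coeff k = 1 := by
    have := A.charpoly_monic
    have h2 := this.coeff_natDegree
    rwa [hd] at h2
  rw [hd, Finset.sum_range_succ, hm, one_smul] at h0
  exact eq_neg_of_add_eq_zero_left (by linear_combination (norm := abel) h0)

end Aux2

section Aux3

variable {F : Type*} [Field F] {n k : ℕ}

lemma mulVec_pow_card_eq_zero (hk : 1 ≤ k) (A : Matrix (Fin k) (Fin k) F)
    (C : Matrix (Fin (n - k)) (Fin k) F) (y : Fin k → F)
    (hy : ∀ j < k, (C * A ^ j).mulVec y = 0) :
    (C * A ^ k).mulVec y = 0 := by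
  have hAk : (A ^ k).mulVec y = -∑ j ∈ Finset.range k, A.charpoly.coeff j • (A ^ j).mulVec y := by
    rw [pow_card_eq hk A, Matrix.neg_mulVec]
    congr 1
    have := map_sum (AddMonoidHom.mk' (fun M : Matrix (Fin k) (Fin k) F => M.mulVec y)
      (fun M N => Matrix.add_mulVec M N y))
      (fun j => A.charpoly.coeff j • A ^ j) (Finset.range k)
    simp only [AddMonoidHom.mk'_apply] at this
    rw [this]
    exact Finset.sum_congr rfl fun j _ => Matrix.smul_mulVec _ _ _
  rw [← Matrix.mulVec_mulVec, hAk]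
  have : ∀ j ∈ Finset.range k, C.mulVec (A.charpoly.coeff j • (A ^ j).mulVec y) = 0 := by
    intro j hj
    rw [Matrix.mulVec_smul, Matrix.mulVec_mulVec, hy j (Finset.mem_range.mp hj), smul_zero]
  rw [Matrix.mulVec_neg, neg_eq_zero, ← Matrix.mulVecLin_apply, map_sum]
  apply Finset.sum_eq_zero
  intro j hj
  rw [Matrix.mulVecLin_apply]
  exact this j hj

lemma A_invariant (hk : 1 ≤ k) (A : Matrix (Fin k) (Fin k) F)
    (C : Matrix (Fin (n - k)) (Fin k) F) (y : Fin k → F)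
    (hy : ∀ j < k, (C * A ^ j).mulVec y = 0) :
    ∀ j < k, (C * A ^ j).mulVec (A.mulVec y) = 0 := by
  intro j hj
  have h1 : (C * A ^ j).mulVec (A.mulVec y) = (C * A ^ (j + 1)).mulVec y := by
    rw [Matrix.mulVec_mulVec, pow_succ, ← Matrix.mul_assoc]
  rw [h1]
  rcases lt_or_eq_of_le (Nat.succ_le_of_lt hj) with h | h
  · exact hy _ h
  · have h' : j + 1 = k := by omega
    rw [h']
    exact mulVec_pow_card_eq_zero hk A C y hy

end Aux3

theorem simple_iff_zero_kernel_pair {F : Type*} [Field F] [Fintype F]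
    (n k : ℕ) (hk : 1 ≤ k) (hkn : k < n)
    (A : Matrix (Fin k) (Fin k) F) (C : Matrix (Fin (n - k)) (Fin k) F)
    (W : Submodule F (Fin n → F))
    (hW : W = Submodule.span F
      (Set.range fun j : Fin k => Pi.single (Fin.castLE hkn.le j) (1 : F)))
    (T : W →ₗ[F] (Fin n → F))
    (hT : ∀ (j : Fin k) (w : W), (w : Fin n → F) = Pi.single (Fin.castLE hkn.le j) 1 →
      T w = fun i : Fin n =>
        if h : (i : ℕ) < k then A ⟨i, h⟩ j else C ⟨(i : ℕ) - k, by omega⟩ j) :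
    IsSimple W T ↔
      ⨅ i : Fin k, LinearMap.ker (Matrix.mulVecLin (C * A ^ (i : ℕ))) = ⊥ := by
  have hWr : W = LinearMap.range (embL F n k) := by
    rw [hW, LinearMap.range_eq_map, ← (Pi.basisFun F (Fin k)).span_eq,
      Submodule.map_span, ← Set.range_comp]
    refine congrArg (Submodule.span F) (congrArg Set.range (funext fun j => ?_))
    show Pi.single (Fin.castLE hkn.le j) (1:F) = embL F n k (Pi.basisFun F (Fin k) j)
    rw [Pi.basisFun_apply]
    exact (embL_single hkn.le j).symm
  have hmemW : ∀ x : Fin k → F, embL F n k x ∈ W := fun x => hWr ▸ ⟨x, rfl⟩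
  let S : (Fin k → F) →ₗ[F] W := (embL F n k).codRestrict W hmemW
  have hScoe : ∀ x : Fin k → F, ((S x : W) : Fin n → F) = embL F n k x := fun x => rfl
  have hTS : ∀ x : Fin k → F, T (S x) = blockL hkn A C x := by
    have heq : T ∘ₗ S = blockL hkn A C := by
      apply Module.Basis.ext (Pi.basisFun F (Fin k))
      intro j
      rw [LinearMap.comp_apply, Pi.basisFun_apply]
      have hwcoe : ((S (Pi.single j 1) : W) : Fin n → F) = Pi.single (Fin.castLE hkn.le j) 1 := by
        rw [hScoe, embL_single]
      rw [hT j _ hwcoe]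
      funext i
      rw [blockL_apply]
      by_cases h : (i : ℕ) < k
      · rw [dif_pos h, dif_pos h, Matrix.mulVec_single]
        exact (mul_one _).symm
      · rw [dif_neg h, dif_neg h, Matrix.mulVec_single]
        exact (mul_one _).symm
    intro x; exact LinearMap.congr_fun heq x
  have hKiff : ∀ y : Fin k → F,
      (y ∈ ⨅ i : Fin k, LinearMap.ker (Matrix.mulVecLin (C * A ^ (i : ℕ)))) ↔
      ∀ j < k, (C * A ^ j).mulVec y = 0 := by
    intro y
    rw [Submodule.mem_iInf]
    simp only [LinearMap.mem_ker, Matrix.mulVecLin_apply]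
    constructor
    · intro h j hj; exact h ⟨j, hj⟩
    · intro h i; exact h i i.isLt
  have hWvan : ∀ v ∈ W, ∀ i : Fin n, ¬ (i : ℕ) < k → v i = 0 := by
    intro v hv i hi
    rw [hWr] at hv
    obtain ⟨x, rfl⟩ := hv
    rw [embL_apply, dif_neg hi]
  have hWne : W ≠ ⊤ := by
    intro h
    have h1 : (Pi.single (⟨k, hkn⟩ : Fin n) (1 : F)) ∈ W := h ▸ Submodule.mem_top
    have h2 := hWvan _ h1 ⟨k, hkn⟩ (lt_irrefl k)
    rw [Pi.single_eq_same] at h2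
    exact one_ne_zero h2
  constructor
  · intro hs
    rw [eq_bot_iff]
    intro y hy
    set K := ⨅ i : Fin k, LinearMap.ker (Matrix.mulVecLin (C * A ^ (i : ℕ))) with hKdef
    have hmapW : Submodule.map (embL F n k) K ≤ W := by
      rintro v ⟨x, _, rfl⟩; exact hmemW x
    have hU := hs (Submodule.map (embL F n k) K) hmapW ?_ ?_
    · have hmem : embL F n k y ∈ Submodule.map (embL F n k) K := ⟨y, hy, rfl⟩
      rw [hU] at hmem
      rw [Submodule.mem_bot]
      apply embL_injective hkn.le
      rw [Submodule.mem_bot] at hmem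
      rw [hmem, map_zero]
    · rintro ⟨v, hvW⟩ hvU
      obtain ⟨x, hxK, hx⟩ := hvU
      have hx' : (⟨v, hvW⟩ : W) = S x := Subtype.ext hx.symm
      rw [hx', hTS x]
      have hxall := (hKiff x).mp hxK
      have hC0 : C.mulVec x = 0 := by
        have h0 := hxall 0 hk
        rwa [pow_zero, Matrix.mul_one] at h0
      rw [blockL_eq_embL hkn A C x hC0]
      exact ⟨A.mulVec x, (hKiff _).mpr (A_invariant hk A C x hxall), rfl⟩
    · intro h
      exact hWne (top_unique (h ▸ hmapW))
  · intro hK U hUW hUinv hUne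
    rw [eq_bot_iff]
    intro u huU
    have huW := hUW huU
    rw [hWr] at huW
    obtain ⟨x, rfl⟩ := huW
    have step : ∀ z : Fin k → F, embL F n k z ∈ U →
        C.mulVec z = 0 ∧ embL F n k (A.mulVec z) ∈ U := by
      intro z hz
      have h1 : T (S z) ∈ U := hUinv (S z) hz
      rw [hTS z] at h1
      have hC0 : C.mulVec z = 0 := by
        funext m
        have hmn : k + (m : ℕ) < n := by omega
        have h2 := hWvan _ (hUW h1) ⟨k + m, hmn⟩ (by simp)
        rw [blockL_apply, dif_neg (by simp : ¬ ((⟨k + (m : ℕ), hmn⟩ : Fin n) : ℕ) < k)] at h2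
        have hm : (⟨((⟨k + (m : ℕ), hmn⟩ : Fin n) : ℕ) - k, by omega⟩ : Fin (n - k)) = m := by
          apply Fin.ext; simp
        rw [hm] at h2
        simpa using h2
      refine ⟨hC0, ?_⟩
      rwa [blockL_eq_embL hkn A C z hC0] at h1
    have pows : ∀ j : ℕ, embL F n k ((A ^ j).mulVec x) ∈ U := by
      intro j
      induction j with
      | zero => simpa [Matrix.one_mulVec] using huU
      | succ j ih =>
        have h3 := (step _ ih).2
        rwa [Matrix.mulVec_mulVec, ← pow_succ'] at h3
    have hxK : x ∈ ⨅ i : Fin k, LinearMap.ker (Matrix.mulVecLin (C * A ^ (i : ℕ))) := by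
      apply (hKiff x).mpr
      intro j hj
      have h4 := (step _ (pows j)).1
      rwa [Matrix.mulVec_mulVec] at h4
    rw [hK, Submodule.mem_bot] at hxK
    rw [Submodule.mem_bot, hxK, map_zero]
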